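/- Let I be an ideal of the Onsager algebra O = v₀k[t] ⊕ v₁k[t] ⊕ v₂k[t] (with [v₀,v₁] = −v₂(t−1), [v₁,v₂] = −v₀, [v₂,v₀] = v₁t), and define J_I = {p(t) ∈ k[t] : ∃ p₁, p₂ ∈ k[t], v₀p(t) + v₁p₁(t) + v₂p₂(t) ∈ I}. Then J_I is an ideal of k[t], and O·J_I·t(t−1) ⊆ I ⊆ O·J_I. -/

import Mathlib

open Polynomial

/-- Let `O = v₀k[t] ⊕ v₁k[t] ⊕ v₂k[t]` be the realization of the Onsager algebra as the
free `k[t]`-module on `v₀, v₁, v₂` with `k[t]`-bilinear brackets `[v₀,v₁] = -v₂(t-1)`,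
`[v₁,v₂] = -v₀`, `[v₂,v₀] = v₁t`, let `I` be an ideal of `O` and
`J_I = {p ∈ k[t] : ∃ p₁ p₂, v₀p + v₁p₁ + v₂p₂ ∈ I}`.  Then `J_I` is an ideal of `k[t]`
and `O·J_I·t(t-1) ⊆ I ⊆ O·J_I`. -/
theorem stmt_19 {k : Type*} [Field k] [CharZero k]
    {O : Type*} [LieRing O] [LieAlgebra k O]
    [Module (Polynomial k) O] [IsScalarTower k (Polynomial k) O]
    (v : Fin 3 → O)
    (bas : Module.Basis (Fin 3) (Polynomial k) O) (hbas : ∀ i, bas i = v i)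
    (hsmul : ∀ (p : Polynomial k) (x y : O), ⁅p • x, y⁆ = p • ⁅x, y⁆)
    (h01 : ⁅v 0, v 1⁆ = -(((X : Polynomial k) - 1) • v 2))
    (h12 : ⁅v 1, v 2⁆ = -v 0)
    (h20 : ⁅v 2, v 0⁆ = (X : Polynomial k) • v 1)
    (I : LieIdeal k O) :
    let JI : Set (Polynomial k) :=
      {p | ∃ p₁ p₂ : Polynomial k, p • v 0 + p₁ • v 1 + p₂ • v 2 ∈ I}
    -- `J_I` is an ideal of `k[t]`:
    (∃ Jid : Ideal (Polynomial k), (Jid : Set (Polynomial k)) = JI) ∧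
    -- `O·J_I·t(t-1) ⊆ I`:
    (∀ p₀ p₁ p₂ : Polynomial k, p₀ ∈ JI → p₁ ∈ JI → p₂ ∈ JI →
      ((X : Polynomial k) * ((X : Polynomial k) - 1)) •
        (p₀ • v 0 + p₁ • v 1 + p₂ • v 2) ∈ I) ∧
    -- `I ⊆ O·J_I`:
    (∀ x : O, x ∈ I → ∃ p₀ p₁ p₂ : Polynomial k,
      p₀ ∈ JI ∧ p₁ ∈ JI ∧ p₂ ∈ JI ∧ x = p₀ • v 0 + p₁ • v 1 + p₂ • v 2) := by
  intro JI
  -- derived brackets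
  have h21 : ⁅v 2, v 1⁆ = v 0 := by rw [← lie_skew, h12, neg_neg]
  have h10 : ⁅v 1, v 0⁆ = ((X : Polynomial k) - 1) • v 2 := by
    rw [← lie_skew, h01, neg_neg]
  have h02 : ⁅v 0, v 2⁆ = -((X : Polynomial k) • v 1) := by rw [← lie_skew, h20]
  -- bracketing a general element with v 1 and v 2 and v 0
  have hL1 : ∀ a b c : Polynomial k,
      ⁅a • v 0 + b • v 1 + c • v 2, v 1⁆
        = c • v 0 + (0 : Polynomial k) • v 1 + (-(a * ((X : Polynomial k) - 1))) • v 2 := by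
    intro a b c
    rw [add_lie, add_lie, hsmul, hsmul, hsmul, h01, lie_self, h21]
    module
  have hL2 : ∀ a b c : Polynomial k,
      ⁅a • v 0 + b • v 1 + c • v 2, v 2⁆
        = (-b) • v 0 + (-(a * (X : Polynomial k))) • v 1 + (0 : Polynomial k) • v 2 := by
    intro a b c
    rw [add_lie, add_lie, hsmul, hsmul, hsmul, h02, h12, lie_self]
    module
  -- bracketing with basis vectors stays in I
  have hlieI : ∀ m : O, m ∈ I → ∀ j : Fin 3, ⁅m, v j⁆ ∈ I := by
    intro m hm j
    rw [← lie_skew]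
    exact neg_mem (I.lie_mem hm)
  -- membership of coordinates in JI
  have memJ0 : ∀ a b c : Polynomial k, a • v 0 + b • v 1 + c • v 2 ∈ I → a ∈ JI :=
    fun a b c h => ⟨b, c, h⟩
  have memJ2 : ∀ a b c : Polynomial k, a • v 0 + b • v 1 + c • v 2 ∈ I → c ∈ JI := by
    intro a b c h
    have m := hlieI _ h 1
    rw [hL1] at m
    exact ⟨0, -(a * ((X : Polynomial k) - 1)), m⟩
  have memJ1 : ∀ a b c : Polynomial k, a • v 0 + b • v 1 + c • v 2 ∈ I → b ∈ JI := by
    intro a b c h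
    have m := hlieI _ h 2
    rw [hL2] at m
    refine ⟨a * (X : Polynomial k), 0, ?_⟩
    have e : b • v 0 + (a * (X : Polynomial k)) • v 1 + (0 : Polynomial k) • v 2
        = -((-b) • v 0 + (-(a * (X : Polynomial k))) • v 1 + (0 : Polynomial k) • v 2) := by
      module
    rw [e]
    exact neg_mem m
  -- JI is closed under negation
  have hnegJ : ∀ p : Polynomial k, p ∈ JI → -p ∈ JI := by
    rintro p ⟨p₁, p₂, h⟩
    refine ⟨-p₁, -p₂, ?_⟩
    have e : (-p) • v 0 + (-p₁) • v 1 + (-p₂) • v 2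
        = -(p • v 0 + p₁ • v 1 + p₂ • v 2) := by module
    rw [e]; exact neg_mem h
  -- JI is closed under addition
  have haddJ : ∀ p q : Polynomial k, p ∈ JI → q ∈ JI → p + q ∈ JI := by
    rintro p q ⟨p₁, p₂, hp⟩ ⟨q₁, q₂, hq⟩
    refine ⟨p₁ + q₁, p₂ + q₂, ?_⟩
    have e : (p + q) • v 0 + (p₁ + q₁) • v 1 + (p₂ + q₂) • v 2
        = (p • v 0 + p₁ • v 1 + p₂ • v 2) + (q • v 0 + q₁ • v 1 + q₂ • v 2) := by module
    rw [e]; exact add_mem hp hq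
  have hzeroJ : (0 : Polynomial k) ∈ JI := by
    refine ⟨0, 0, ?_⟩
    have e : (0 : Polynomial k) • v 0 + (0 : Polynomial k) • v 1 + (0 : Polynomial k) • v 2
        = (0 : O) := by module
    rw [e]; exact zero_mem I
  -- JI is closed under multiplication by X
  have hXJ : ∀ p : Polynomial k, p ∈ JI → (X : Polynomial k) * p ∈ JI := by
    rintro p ⟨p₁, p₂, h⟩
    have m := hlieI _ h 2
    rw [hL2] at m
    have h1 : -(p * (X : Polynomial k)) ∈ JI := memJ1 _ _ _ m
    have h2 := hnegJ _ h1
    rw [neg_neg] at h2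
    rwa [mul_comm]
  -- JI is closed under multiplication by constants
  have hCJ : ∀ (r : k) (p : Polynomial k), p ∈ JI → C r * p ∈ JI := by
    rintro r p ⟨p₁, p₂, h⟩
    refine ⟨C r * p₁, C r * p₂, ?_⟩
    have e : (C r * p) • v 0 + (C r * p₁) • v 1 + (C r * p₂) • v 2
        = r • (p • v 0 + p₁ • v 1 + p₂ • v 2) := by
      rw [smul_add, smul_add, ← smul_assoc, ← smul_assoc, ← smul_assoc,
        smul_eq_C_mul, smul_eq_C_mul, smul_eq_C_mul]
    rw [e]; exact I.smul_mem r h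
  -- JI is closed under multiplication by arbitrary polynomials
  have hmulJ : ∀ f p : Polynomial k, p ∈ JI → f * p ∈ JI := by
    intro f
    induction f using Polynomial.induction_on with
    | C a => exact fun p hp => hCJ a p hp
    | add f g hf hg =>
      intro p hp
      rw [add_mul]
      exact haddJ _ _ (hf p hp) (hg p hp)
    | monomial n a ih =>
      intro p hp
      have : C a * X ^ (n + 1) * p = X * (C a * X ^ n * p) := by ring
      rw [this]
      exact hXJ _ (ih p hp)
  -- the key claim: t(t-1)·J_I·v_i ⊆ I
  have key : ∀ p : Polynomial k, p ∈ JI → ∀ i : Fin 3,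
      ((X : Polynomial k) * ((X : Polynomial k) - 1) * p) • v i ∈ I := by
    rintro p ⟨b, c, h⟩ i
    -- chain of brackets through v 1, v 1, giving info on v 0, v 2 coefficients
    have m1 := hlieI _ h 1
    rw [hL1] at m1
    have m2 := hlieI _ m1 1
    rw [hL1] at m2
    -- m2 : (-(p*(X-1))) • v0 + 0 • v1 + (-(c*(X-1))) • v2 ∈ I
    have m3 := hlieI _ m2 2
    rw [hL2] at m3
    -- m3 : (-0) • v0 + (-(-(p*(X-1))*X)) • v1 + 0 • v2 ∈ I   (= p(X-1)X • v1)
    -- other chain through v 2, v 2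
    have n1 := hlieI _ h 2
    rw [hL2] at n1
    have n2 := hlieI _ n1 2
    rw [hL2] at n2
    -- n2 : (-(-(p*X))) • v0 + (-((-b)*X)) • v1 + 0 • v2 ∈ I  (= pX • v0 + bX • v1)
    have n3 := hlieI _ n2 1
    rw [hL1] at n3
    -- n3 : 0 • v0 + 0 • v1 + (-(-(-(p*X))*(X-1))) • v2 ∈ I  (= -(pX(X-1)) • v2)
    have n4 := hlieI _ n3 1
    rw [hL1] at n4
    -- n4 : (-(-(-(p*X))*(X-1))) • v0 + 0 • v1 + (-(0*(X-1))) • v2 ∈ I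
    fin_cases i
    · show ((X : Polynomial k) * ((X : Polynomial k) - 1) * p) • v 0 ∈ I
      have e : ((X : Polynomial k) * ((X : Polynomial k) - 1) * p) • v 0
          = -((-(-(-(p * (X : Polynomial k))) * ((X : Polynomial k) - 1))) • v 0
              + (0 : Polynomial k) • v 1
              + (-((0 : Polynomial k) * ((X : Polynomial k) - 1))) • v 2) := by
        module
      rw [e]; exact neg_mem n4
    · show ((X : Polynomial k) * ((X : Polynomial k) - 1) * p) • v 1 ∈ I
      have e : ((X : Polynomial k) * ((X : Polynomial k) - 1) * p) • v 1
          = (-(0 : Polynomial k)) • v 0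
              + (-(-(p * ((X : Polynomial k) - 1)) * (X : Polynomial k))) • v 1
              + (0 : Polynomial k) • v 2 := by
        module
      rw [e]; exact m3
    · show ((X : Polynomial k) * ((X : Polynomial k) - 1) * p) • v 2 ∈ I
      have e : ((X : Polynomial k) * ((X : Polynomial k) - 1) * p) • v 2
          = -((0 : Polynomial k) • v 0 + (0 : Polynomial k) • v 1
              + (-(-(-(p * (X : Polynomial k))) * ((X : Polynomial k) - 1))) • v 2) := by
        module
      rw [e]; exact neg_mem n3
  refine ⟨?_, ?_, ?_⟩
  · -- JI is an ideal
    refine ⟨{ carrier := JI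
              add_mem' := fun ha hb => haddJ _ _ ha hb
              zero_mem' := hzeroJ
              smul_mem' := fun f p hp => by
                simpa [smul_eq_mul] using hmulJ f p hp }, rfl⟩
  · -- O·J_I·t(t-1) ⊆ I
    intro p₀ p₁ p₂ h₀ h₁ h₂
    have e : ((X : Polynomial k) * ((X : Polynomial k) - 1)) •
        (p₀ • v 0 + p₁ • v 1 + p₂ • v 2)
        = ((X : Polynomial k) * ((X : Polynomial k) - 1) * p₀) • v 0
          + ((X : Polynomial k) * ((X : Polynomial k) - 1) * p₁) • v 1
          + ((X : Polynomial k) * ((X : Polynomial k) - 1) * p₂) • v 2 := by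
      module
    rw [e]
    exact add_mem (add_mem (key p₀ h₀ 0) (key p₁ h₁ 1)) (key p₂ h₂ 2)
  · -- I ⊆ O·J_I
    intro x hx
    have hrepr : x = (bas.repr x 0) • v 0 + (bas.repr x 1) • v 1 + (bas.repr x 2) • v 2 := by
      conv_lhs => rw [← bas.sum_repr x]
      rw [Fin.sum_univ_three, hbas 0, hbas 1, hbas 2]
    rw [hrepr] at hx
    exact ⟨_, _, _, memJ0 _ _ _ hx, memJ1 _ _ _ hx, memJ2 _ _ _ hx, hrepr⟩
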